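/- Let L_h and L_v be Kripke complete unimodal logics such that the classes of frames for L_h and L_v are closed under the 'disjoint union with a spy-point' operation, and the product logic L_h × L_v is globally Kripke complete. Then for all δ-free bimodal formulas φ and ψ: φ globally entails ψ over L_h × L_v if and only if the formula (univ^δ ∧ □_h□_v φ) → □_h□_v ψ belongs to L_h ×^δ L_v, where univ^δ := □_h◇_v δ ∧ □_h□_h◇_v δ ∧ □_v◇_h δ ∧ □_v□_v◇_h δ. Hence the global L_h × L_v-consequence relation is reducible to L_h ×^δ L_v-validity. -/

import Mathlib

/-- Formulas of the bimodal language with horizontal and vertical boxes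
and the diagonal constant `δ`. -/
inductive Fml (P : Type*) where
  | var : P → Fml P
  | delta : Fml P
  | neg : Fml P → Fml P
  | and : Fml P → Fml P → Fml P
  | boxh : Fml P → Fml P
  | boxv : Fml P → Fml P
  deriving DecidableEq

namespace Fml

variable {P : Type*}

def or (φ ψ : Fml P) : Fml P := .neg (.and (.neg φ) (.neg ψ))
def imp (φ ψ : Fml P) : Fml P := Fml.or (.neg φ) ψ
def diah (φ : Fml P) : Fml P := .neg (.boxh (.neg φ))
def diav (φ : Fml P) : Fml P := .neg (.boxv (.neg φ))
/-- `□_h⁺ φ := φ ∧ □_h φ` -/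
def boxhp (φ : Fml P) : Fml P := .and φ (.boxh φ)
/-- `□_v⁺ φ := φ ∧ □_v φ` -/
def boxvp (φ : Fml P) : Fml P := .and φ (.boxv φ)
/-- `◇_h⁺ φ := φ ∨ ◇_h φ` -/
def diahp (φ : Fml P) : Fml P := Fml.or φ (diah φ)
/-- `◇_v⁺ φ := φ ∨ ◇_v φ` -/
def diavp (φ : Fml P) : Fml P := Fml.or φ (diav φ)

end Fml

/-- Satisfaction in a model based on the δ-product of the frames `(Wh, Rh)` and `(Wv, Rv)`
(frames living inside the ambient type `U`), with valuation `v`.  The diagonal `δ` is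
interpreted as `{(x,x) : x ∈ Wh ∩ Wv}`. -/
def dsat {U P : Type*} (Wh Wv : Set U) (Rh Rv : U → U → Prop) (v : P → Set (U × U)) :
    U × U → Fml P → Prop
  | p, .var q => p ∈ v q
  | p, .delta => p.1 = p.2 ∧ p.1 ∈ Wh ∧ p.1 ∈ Wv
  | p, .neg φ => ¬ dsat Wh Wv Rh Rv v p φ
  | p, .and φ ψ => dsat Wh Wv Rh Rv v p φ ∧ dsat Wh Wv Rh Rv v p ψ
  | p, .boxh φ => ∀ x : U, x ∈ Wh → Rh p.1 x → dsat Wh Wv Rh Rv v (x, p.2) φ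
  | p, .boxv φ => ∀ y : U, y ∈ Wv → Rv p.2 y → dsat Wh Wv Rh Rv v (p.1, y) φ

/-- A formula is δ-free if the diagonal constant does not occur in it. -/
def deltaFree {P : Type*} : Fml P → Prop
  | .var _ => True
  | .delta => False
  | .neg φ => deltaFree φ
  | .and φ ψ => deltaFree φ ∧ deltaFree ψ
  | .boxh φ => deltaFree φ
  | .boxv φ => deltaFree φ

universe u v

/-- A Kripke frame living inside the ambient type `U`. -/
structure KFrm (U : Type u) where
  W : Set U
  R : U → U → Prop

/-- The disjoint union of the frames `F i` with a fresh spy-point (`none`). -/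
def spyUnion {U I : Type u} (F : I → KFrm U) : KFrm (Option (U × I)) where
  W := {p | p = none ∨ ∃ (w : U) (i : I), p = some (w, i) ∧ w ∈ (F i).W}
  R := fun a b =>
    (a = none ∧ ∃ (w : U) (i : I), b = some (w, i) ∧ w ∈ (F i).W) ∨
    (∃ (w w' : U) (i : I), a = some (w, i) ∧ b = some (w', i) ∧
      w ∈ (F i).W ∧ w' ∈ (F i).W ∧ (F i).R w w')

/-- An isomorphism between frames: a bijection of the carriers preserving and
reflecting the relation. -/
def FrmIso {U : Type u} {U' : Type u} (F : KFrm U) (F' : KFrm U') : Prop :=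
  ∃ f : U → U', Set.BijOn f F.W F'.W ∧
    ∀ a b : U, a ∈ F.W → b ∈ F.W → (F.R a b ↔ F'.R (f a) (f b))

/-- Satisfaction in an abstract bimodal model (carrier `W` inside ambient type `A`),
ignoring the diagonal constant (δ is evaluated as falsum). -/
def bsat {A : Type u} {P : Type v} (W : Set A) (Rh Rv : A → A → Prop) (val : P → Set A) :
    A → Fml P → Prop
  | w, .var q => w ∈ val q
  | _, .delta => False
  | w, .neg φ => ¬ bsat W Rh Rv val w φ
  | w, .and φ ψ => bsat W Rh Rv val w φ ∧ bsat W Rh Rv val w ψ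
  | w, .boxh φ => ∀ u : A, u ∈ W → Rh w u → bsat W Rh Rv val u φ
  | w, .boxv φ => ∀ u : A, u ∈ W → Rv w u → bsat W Rh Rv val u φ

/-- Horizontal relation of the product of two frames. -/
def prodRh {U : Type u} (F G : KFrm U) : U × U → U × U → Prop :=
  fun p q => F.R p.1 q.1 ∧ p.2 = q.2

/-- Vertical relation of the product of two frames. -/
def prodRv {U : Type u} (F G : KFrm U) : U × U → U × U → Prop :=
  fun p q => p.1 = q.1 ∧ G.R p.2 q.2

/-- A formula is globally true in an abstract bimodal model. -/
def GlobTrue {A : Type u} {P : Type v} (W : Set A) (Rh Rv : A → A → Prop)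
    (val : P → Set A) (φ : Fml P) : Prop :=
  ∀ w : A, w ∈ W → bsat W Rh Rv val w φ

/-- The product logic `L_h × L_v` of the frame classes `Ch` (for `L_h`) and `Cv` (for `L_v`):
all δ-free bimodal formulas valid in every product of a frame for `L_h` with a frame
for `L_v`. -/
def ProductLogic {P : Type v} (Ch Cv : ∀ U : Type u, KFrm U → Prop) : Set (Fml P) :=
  {φ | deltaFree φ ∧ ∀ (U : Type u) (F G : KFrm U), Ch U F → Cv U G →
    ∀ (val : P → Set (U × U)) (p : U × U), p ∈ F.W ×ˢ G.W →
      bsat (F.W ×ˢ G.W) (prodRh F G) (prodRv F G) val p φ}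

/-- Global consequence over the logic `L` (as a set of formulas): every bimodal model
globally validating `L` and `φ` globally validates `ψ`. -/
def GlobCons {P : Type v} (L : Set (Fml P)) (φ ψ : Fml P) : Prop :=
  ∀ (A : Type u) (W : Set A) (Rh Rv : A → A → Prop) (val : P → Set A),
    (∀ χ ∈ L, GlobTrue W Rh Rv val χ) → GlobTrue W Rh Rv val φ → GlobTrue W Rh Rv val ψ

/-- Validity in the δ-product logic `L_h ×^δ L_v` of the frame classes `Ch`, `Cv`:
truth at every world of every model based on a δ-product of a frame for `L_h` with a
frame for `L_v`. -/
def DProdValid {P : Type v} (Ch Cv : ∀ U : Type u, KFrm U → Prop) (φ : Fml P) : Prop :=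
  ∀ (U : Type u) (F G : KFrm U), Ch U F → Cv U G →
    ∀ (val : P → Set (U × U)) (p : U × U), p ∈ F.W ×ˢ G.W →
      dsat F.W G.W F.R G.R val p φ

/-- The formula `univ^δ := □_h◇_vδ ∧ □_h□_h◇_vδ ∧ □_v◇_hδ ∧ □_v□_v◇_hδ`. -/
def univDelta {P : Type v} : Fml P :=
  .and (.boxh (Fml.diav .delta))
    (.and (.boxh (.boxh (Fml.diav .delta)))
      (.and (.boxv (Fml.diah .delta)) (.boxv (.boxv (Fml.diah .delta)))))


/-! ### Auxiliary lemmas -/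

section Aux

universe w

/-- Generated submodel lemma: truth of formulas is preserved when restricting to a
relation-closed subset. -/
lemma bsat_gen {A : Type w} {P : Type v} (W W' : Set A) (Rh Rv : A → A → Prop)
    (val : P → Set A) (hsub : W' ⊆ W)
    (hclh : ∀ a ∈ W', ∀ b ∈ W, Rh a b → b ∈ W')
    (hclv : ∀ a ∈ W', ∀ b ∈ W, Rv a b → b ∈ W') :
    ∀ (χ : Fml P) (w : A), w ∈ W' →
      (bsat W' Rh Rv val w χ ↔ bsat W Rh Rv val w χ) := by
  intro χ
  induction χ with
  | var q => intro w hw; simp [bsat]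
  | delta => intro w hw; simp [bsat]
  | neg φ ih => intro w hw; simp only [bsat]; rw [ih w hw]
  | and φ ψ ihφ ihψ => intro w hw; simp only [bsat]; rw [ihφ w hw, ihψ w hw]
  | boxh φ ih =>
      intro w hw
      simp only [bsat]
      constructor
      · intro h u hu hr
        have hu' : u ∈ W' := hclh w hw u hu hr
        exact (ih u hu').mp (h u hu' hr)
      · intro h u hu hr
        exact (ih u hu).mpr (h u (hsub hu) hr)
  | boxv φ ih =>
      intro w hw
      simp only [bsat]
      constructor
      · intro h u hu hr
        have hu' : u ∈ W' := hclv w hw u hu hr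
        exact (ih u hu').mp (h u hu' hr)
      · intro h u hu hr
        exact (ih u hu).mpr (h u (hsub hu) hr)

/-- On a product frame, δ-product satisfaction of δ-free formulas agrees with abstract
bimodal satisfaction. -/
lemma dsat_prod {U : Type u} {P : Type v} (F G : KFrm U) (val : P → Set (U × U)) :
    ∀ χ : Fml P, deltaFree χ → ∀ p : U × U, p ∈ F.W ×ˢ G.W →
      (dsat F.W G.W F.R G.R val p χ ↔
        bsat (F.W ×ˢ G.W) (prodRh F G) (prodRv F G) val p χ) := by
  intro χ
  induction χ with
  | var q => intro _ p hp; simp [dsat, bsat]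
  | delta => intro h; exact absurd h (by simp [deltaFree])
  | neg φ ih => intro h p hp; simp only [dsat, bsat]; rw [ih h p hp]
  | and φ ψ ihφ ihψ =>
      intro h p hp; simp only [dsat, bsat]
      rw [ihφ h.1 p hp, ihψ h.2 p hp]
  | boxh φ ih =>
      intro h p hp
      simp only [dsat, bsat]
      constructor
      · rintro hb ⟨u1, u2⟩ hu ⟨hr, he⟩
        subst he
        exact (ih h (u1, p.2) ⟨hu.1, hp.2⟩).mp (hb u1 hu.1 hr)
      · intro hb x hx hr
        exact (ih h (x, p.2) ⟨hx, hp.2⟩).mpr (hb (x, p.2) ⟨hx, hp.2⟩ ⟨hr, rfl⟩)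
  | boxv φ ih =>
      intro h p hp
      simp only [dsat, bsat]
      constructor
      · rintro hb ⟨u1, u2⟩ hu ⟨he, hr⟩
        subst he
        exact (ih h (p.1, u2) ⟨hp.1, hu.2⟩).mp (hb u2 hu.2 hr)
      · intro hb y hy hr
        exact (ih h (p.1, y) ⟨hp.1, hy⟩).mpr (hb (p.1, y) ⟨hp.1, hy⟩ ⟨rfl, hr⟩)

/-- Copy of `F` indexed by the worlds of `G`, with a spy point, realized inside
`Option (U × U)` with horizontal points `some (w, i)`. -/
def spyH {U : Type u} (F G : KFrm U) : KFrm (Option (U × U)) where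
  W := {p | p = none ∨ ∃ w i, p = some (w, i) ∧ w ∈ F.W ∧ i ∈ G.W}
  R := fun a b =>
    (a = none ∧ ∃ w i, b = some (w, i) ∧ w ∈ F.W ∧ i ∈ G.W) ∨
    (∃ w w' i, a = some (w, i) ∧ b = some (w', i) ∧
      w ∈ F.W ∧ w' ∈ F.W ∧ i ∈ G.W ∧ F.R w w')

/-- Copy of `G` indexed by the worlds of `F`, with a spy point, realized inside
`Option (U × U)` with vertical points `some (i, v)`. -/
def spyV {U : Type u} (F G : KFrm U) : KFrm (Option (U × U)) where
  W := {p | p = none ∨ ∃ i v, p = some (i, v) ∧ i ∈ F.W ∧ v ∈ G.W}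
  R := fun a b =>
    (a = none ∧ ∃ i v, b = some (i, v) ∧ i ∈ F.W ∧ v ∈ G.W) ∨
    (∃ i v v', a = some (i, v) ∧ b = some (i, v') ∧
      i ∈ F.W ∧ v ∈ G.W ∧ v' ∈ G.W ∧ G.R v v')

lemma spyH_iso {U : Type u} (F G : KFrm U) :
    FrmIso (spyUnion (fun _ : G.W => F)) (spyH F G) := by
  refine ⟨Option.map (fun q : U × G.W => (q.1, q.2.val)), ⟨?_, ?_, ?_⟩, ?_⟩
  · rintro p (rfl | ⟨w, i, rfl, hw⟩)
    · exact Or.inl rfl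
    · exact Or.inr ⟨w, i.val, rfl, hw, i.2⟩
  · intro a _ b _ hab
    have hinj : Function.Injective (fun q : U × G.W => (q.1, q.2.val)) := by
      rintro ⟨w, i⟩ ⟨w', i'⟩ h
      simp only [Prod.mk.injEq] at h
      exact Prod.ext h.1 (Subtype.ext h.2)
    exact Option.map_injective hinj hab
  · rintro p (rfl | ⟨w, i, rfl, hw, hi⟩)
    · exact ⟨none, Or.inl rfl, rfl⟩
    · exact ⟨some (w, ⟨i, hi⟩), Or.inr ⟨w, ⟨i, hi⟩, rfl, hw⟩, rfl⟩
  · intro a b _ _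
    constructor
    · rintro (⟨rfl, w, i, rfl, hw⟩ | ⟨w, w', i, rfl, rfl, hw, hw', hr⟩)
      · exact Or.inl ⟨rfl, w, i.val, rfl, hw, i.2⟩
      · exact Or.inr ⟨w, w', i.val, rfl, rfl, hw, hw', i.2, hr⟩
    · rintro (⟨ha, w, j, hb, hw, hj⟩ | ⟨w, w', j, ha, hb, hw, hw', hj, hr⟩)
      · rcases a with _ | ⟨wa, ia⟩
        · rcases b with _ | ⟨wb, ib⟩
          · simp at hb
          · simp only [Option.map_some, Option.some.injEq, Prod.mk.injEq] at hb
            obtain ⟨rfl, -⟩ := hb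
            exact Or.inl ⟨rfl, wb, ib, rfl, hw⟩
        · simp at ha
      · rcases a with _ | ⟨wa, ia⟩
        · simp at ha
        · rcases b with _ | ⟨wb, ib⟩
          · simp at hb
          · simp only [Option.map_some, Option.some.injEq, Prod.mk.injEq] at ha hb
            obtain ⟨rfl, hai⟩ := ha
            obtain ⟨rfl, hbi⟩ := hb
            have hib : ib = ia := Subtype.ext (hbi.trans (hai.symm))
            subst hib
            exact Or.inr ⟨wa, wb, ib, rfl, rfl, hw, hw', hr⟩

lemma spyV_iso {U : Type u} (F G : KFrm U) :
    FrmIso (spyUnion (fun _ : F.W => G)) (spyV F G) := by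
  refine ⟨Option.map (fun q : U × F.W => (q.2.val, q.1)), ⟨?_, ?_, ?_⟩, ?_⟩
  · rintro p (rfl | ⟨v, i, rfl, hv⟩)
    · exact Or.inl rfl
    · exact Or.inr ⟨i.val, v, rfl, i.2, hv⟩
  · intro a _ b _ hab
    have hinj : Function.Injective (fun q : U × F.W => (q.2.val, q.1)) := by
      rintro ⟨v, i⟩ ⟨v', i'⟩ h
      simp only [Prod.mk.injEq] at h
      exact Prod.ext h.2 (Subtype.ext h.1)
    exact Option.map_injective hinj hab
  · rintro p (rfl | ⟨i, v, rfl, hi, hv⟩)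
    · exact ⟨none, Or.inl rfl, rfl⟩
    · exact ⟨some (v, ⟨i, hi⟩), Or.inr ⟨v, ⟨i, hi⟩, rfl, hv⟩, rfl⟩
  · intro a b _ _
    constructor
    · rintro (⟨rfl, v, i, rfl, hv⟩ | ⟨v, v', i, rfl, rfl, hv, hv', hr⟩)
      · exact Or.inl ⟨rfl, i.val, v, rfl, i.2, hv⟩
      · exact Or.inr ⟨i.val, v, v', rfl, rfl, i.2, hv, hv', hr⟩
    · rintro (⟨ha, j, v, hb, hj, hv⟩ | ⟨j, v, v', ha, hb, hj, hv, hv', hr⟩)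
      · rcases a with _ | ⟨va, ia⟩
        · rcases b with _ | ⟨vb, ib⟩
          · simp at hb
          · simp only [Option.map_some, Option.some.injEq, Prod.mk.injEq] at hb
            obtain ⟨-, rfl⟩ := hb
            exact Or.inl ⟨rfl, vb, ib, rfl, hv⟩
        · simp at ha
      · rcases a with _ | ⟨va, ia⟩
        · simp at ha
        · rcases b with _ | ⟨vb, ib⟩
          · simp at hb
          · simp only [Option.map_some, Option.some.injEq, Prod.mk.injEq] at ha hb
            obtain ⟨hai, rfl⟩ := ha
            obtain ⟨hbi, rfl⟩ := hb
            have hib : ib = ia := Subtype.ext (hbi.trans (hai.symm))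
            subst hib
            exact Or.inr ⟨va, vb, ib, rfl, rfl, hv, hv', hr⟩

/-- The lifted valuation on the δ-product of the spy frames. -/
def spyVal {U : Type u} {P : Type v} (val0 : P → Set (U × U)) :
    P → Set (Option (U × U) × Option (U × U)) :=
  fun q => {p | ∃ w i i' v, p = (some (w, i), some (i', v)) ∧ (w, v) ∈ val0 q}

/-- Transfer lemma: δ-free satisfaction at a point `(some (w,i), some (i',v))` of the
δ-product of the spy frames agrees with satisfaction at `(w, v)` in the product model. -/
lemma dsat_spy {U : Type u} {P : Type v} (F G : KFrm U) (val0 : P → Set (U × U)) :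
    ∀ χ : Fml P, deltaFree χ → ∀ w i i' v, w ∈ F.W → i ∈ G.W → i' ∈ F.W → v ∈ G.W →
      (dsat (spyH F G).W (spyV F G).W (spyH F G).R (spyV F G).R (spyVal val0)
          (some (w, i), some (i', v)) χ ↔
        bsat (F.W ×ˢ G.W) (prodRh F G) (prodRv F G) val0 (w, v) χ) := by
  intro χ
  induction χ with
  | var q =>
      intro _ w i i' v hw hi hi' hv
      simp only [dsat, bsat, spyVal, Set.mem_setOf_eq, Prod.mk.injEq, Option.some.injEq]
      constructor
      · rintro ⟨w1, i1, i'1, v1, ⟨⟨hw1, hi1⟩, hi'1, hv1⟩, hval⟩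
        subst hw1; subst hv1; exact hval
      · intro hval; exact ⟨w, i, i', v, ⟨⟨rfl, rfl⟩, rfl, rfl⟩, hval⟩
  | delta => intro h; exact absurd h (by simp [deltaFree])
  | neg φ ih =>
      intro h w i i' v hw hi hi' hv
      simp only [dsat, bsat]
      rw [ih h w i i' v hw hi hi' hv]
  | and φ ψ ihφ ihψ =>
      intro h w i i' v hw hi hi' hv
      simp only [dsat, bsat]
      rw [ihφ h.1 w i i' v hw hi hi' hv, ihψ h.2 w i i' v hw hi hi' hv]
  | boxh φ ih =>
      intro h w i i' v hw hi hi' hv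
      simp only [dsat, bsat]
      constructor
      · intro hb u hu hr
        obtain ⟨u1, u2⟩ := u
        obtain ⟨hru, he⟩ := hr
        have key := hb (some (u1, i)) (Or.inr ⟨u1, i, rfl, hu.1, hi⟩)
          (Or.inr ⟨w, u1, i, rfl, rfl, hw, hu.1, hi, hru⟩)
        rw [ih h u1 i i' v hu.1 hi hi' hv] at key
        simp only [prodRh] at he
        rw [← he]
        exact key
      · intro hb x hx hrx
        rcases hrx with ⟨hc, _⟩ | ⟨w1, w', i1, heq, rfl, hw1, hw', hi1, hr⟩
        · exact absurd hc (by simp)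
        · simp only [Option.some.injEq, Prod.mk.injEq] at heq
          obtain ⟨rfl, rfl⟩ := heq
          rw [ih h w' i i' v hw' hi hi' hv]
          exact hb (w', v) ⟨hw', hv⟩ ⟨hr, rfl⟩
  | boxv φ ih =>
      intro h w i i' v hw hi hi' hv
      simp only [dsat, bsat]
      constructor
      · intro hb u hu hr
        obtain ⟨u1, u2⟩ := u
        obtain ⟨he, hru⟩ := hr
        have key := hb (some (i', u2)) (Or.inr ⟨i', u2, rfl, hi', hu.2⟩)
          (Or.inr ⟨i', v, u2, rfl, rfl, hi', hv, hu.2, hru⟩)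
        rw [ih h w i i' u2 hw hi hi' hu.2] at key
        simp only [prodRv] at he
        rw [← he]
        exact key
      · intro hb y hy hry
        rcases hry with ⟨hc, _⟩ | ⟨i1, v1, v', heq, rfl, hi1, hv1, hv', hr⟩
        · exact absurd hc (by simp)
        · simp only [Option.some.injEq, Prod.mk.injEq] at heq
          obtain ⟨rfl, rfl⟩ := heq
          rw [ih h w i i' v' hw hi hi' hv']
          exact hb (w, v') ⟨hw, hv'⟩ ⟨rfl, hr⟩
  end Aux

/-! ### Universe transfer for global consequence via theory models -/

section Transfer

universe w1 w2

variable {P : Type v}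

/-- The list of propositional variables occurring in a formula. -/
def varList : Fml P → List P
  | .var q => [q]
  | .delta => []
  | .neg χ => varList χ
  | .and χ θ => varList χ ++ varList θ
  | .boxh χ => varList χ
  | .boxv χ => varList χ

/-- A δ-free formula contains at least one variable. -/
lemma varList_ne_nil : ∀ χ : Fml P, deltaFree χ → varList χ ≠ [] := by
  intro χ
  induction χ with
  | var q => intro _; simp [varList]
  | delta => intro h; exact absurd h (by simp [deltaFree])
  | neg χ ih => exact fun h => ih h
  | and χ θ ihχ ihθ =>
      intro h
      simp only [varList, ne_eq, List.append_eq_nil_iff]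
      intro ⟨h1, _⟩
      exact ihχ h.1 h1
  | boxh χ ih => exact fun h => ih h
  | boxv χ ih => exact fun h => ih h

/-- Simultaneous substitution of formulas for variables. -/
def subst {Q : Type*} {R : Type*} (σ : Q → Fml R) : Fml Q → Fml R
  | .var q => σ q
  | .delta => .delta
  | .neg χ => .neg (subst σ χ)
  | .and χ θ => .and (subst σ χ) (subst σ θ)
  | .boxh χ => .boxh (subst σ χ)
  | .boxv χ => .boxv (subst σ χ)

lemma deltaFree_subst {Q : Type*} {R : Type*} (σ : Q → Fml R) (hσ : ∀ q, deltaFree (σ q)) :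
    ∀ χ : Fml Q, deltaFree χ → deltaFree (subst σ χ) := by
  intro χ
  induction χ with
  | var q => intro _; exact hσ q
  | delta => intro h; exact absurd h (by simp [deltaFree])
  | neg χ ih => exact fun h => ih h
  | and χ θ ihχ ihθ => exact fun h => ⟨ihχ h.1, ihθ h.2⟩
  | boxh χ ih => exact fun h => ih h
  | boxv χ ih => exact fun h => ih h

/-- Evaluating a substituted formula equals evaluating the formula under the
induced valuation. -/
lemma bsat_subst {A : Type w2} {Q : Type*} {R : Type*} (W : Set A) (Rh Rv : A → A → Prop)
    (σ : Q → Fml R) (val : R → Set A) :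
    ∀ (χ : Fml Q) (x : A), bsat W Rh Rv val x (subst σ χ) ↔
      bsat W Rh Rv (fun q => {y | bsat W Rh Rv val y (σ q)}) x χ := by
  intro χ
  induction χ with
  | var q => intro x; simp [subst, bsat]
  | delta => intro x; simp [subst, bsat]
  | neg χ ih => intro x; simp only [subst, bsat]; rw [ih x]
  | and χ θ ihχ ihθ => intro x; simp only [subst, bsat]; rw [ihχ x, ihθ x]
  | boxh χ ih =>
      intro x; simp only [subst, bsat]
      exact forall_congr' fun u => imp_congr_right fun _ => imp_congr_right fun _ => ih u
  | boxv χ ih =>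
      intro x; simp only [subst, bsat]
      exact forall_congr' fun u => imp_congr_right fun _ => imp_congr_right fun _ => ih u

variable (l : List P) (hl : l ≠ [])

open Classical in
noncomputable def codeVar (q : P) : Fml (Fin l.length) :=
  if h : q ∈ l then .var (Classical.choose (List.mem_iff_get.mp h))
  else .and (.var ⟨0, List.length_pos_iff.mpr hl⟩) (.neg (.var ⟨0, List.length_pos_iff.mpr hl⟩))

lemma deltaFree_codeVar : ∀ q : P, deltaFree (codeVar l hl q) := by
  intro q
  unfold codeVar
  split
  · simp [deltaFree]
  · exact ⟨trivial, trivial⟩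

/-- Coding of formulas over `P` as formulas over the finite index type. -/
noncomputable def codeF : Fml P → Fml (Fin l.length) := subst (codeVar l hl)

/-- Decoding back. -/
def decode : Fml (Fin l.length) → Fml P := subst (fun i => .var (l.get i))

lemma decode_codeF : ∀ χ : Fml P, (∀ q ∈ varList χ, q ∈ l) →
    decode l (codeF l hl χ) = χ := by
  intro χ
  induction χ with
  | var q =>
      intro h
      have hq : q ∈ l := h q (by simp [varList])
      show decode l (codeVar l hl q) = Fml.var q
      simp only [codeVar, dif_pos hq]
      show Fml.var (l.get _) = Fml.var q
      rw [Classical.choose_spec (List.mem_iff_get.mp hq)]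
  | delta => intro _; rfl
  | neg χ ih =>
      intro h
      show Fml.neg (decode l (codeF l hl χ)) = Fml.neg χ
      rw [ih h]
  | and χ θ ihχ ihθ =>
      intro h
      show Fml.and (decode l (codeF l hl χ)) (decode l (codeF l hl θ)) = Fml.and χ θ
      rw [ihχ fun q hq => h q (by simp [varList, hq]),
        ihθ fun q hq => h q (by simp [varList, hq])]
  | boxh χ ih =>
      intro h
      show Fml.boxh (decode l (codeF l hl χ)) = Fml.boxh χ
      rw [ih h]
  | boxv χ ih =>
      intro h
      show Fml.boxv (decode l (codeF l hl χ)) = Fml.boxv χ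
      rw [ih h]

lemma deltaFree_decode_codeF (χ : Fml P) (h : deltaFree χ) :
    deltaFree (decode l (codeF l hl χ)) :=
  deltaFree_subst (fun i => Fml.var (l.get i)) (fun i => trivial) _
    (deltaFree_subst (codeVar l hl) (deltaFree_codeVar l hl) _ h)

/-- Membership in the product logic is preserved by decode ∘ code. -/
lemma productLogic_decode_codeF {Ch Cv : ∀ U : Type u, KFrm U → Prop} (χ : Fml P)
    (hχ : χ ∈ ProductLogic Ch Cv) : decode l (codeF l hl χ) ∈ ProductLogic Ch Cv := by
  refine ⟨deltaFree_decode_codeF l hl χ hχ.1, ?_⟩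
  intro U F G hF hG val p hp
  rw [decode, codeF, bsat_subst, bsat_subst]
  exact hχ.2 U F G hF hG _ p hp

section TheoryModel

variable {A : Type w2} (W : Set A) (Rh Rv : A → A → Prop) (val : P → Set A)

/-- The theory of a point: the set of coded formulas true there. -/
def Th (x : A) : Set (Fml (Fin l.length)) := {c | bsat W Rh Rv val x (decode l c)}

def WN : Set (ULift.{w1} (Set (Fml (Fin l.length)))) :=
  {T | ∃ x ∈ W, T.down = Th l W Rh Rv val x}

def RhN (T T' : ULift.{w1} (Set (Fml (Fin l.length)))) : Prop :=
  ∀ c, Fml.boxh c ∈ T.down → c ∈ T'.down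

def RvN (T T' : ULift.{w1} (Set (Fml (Fin l.length)))) : Prop :=
  ∀ c, Fml.boxv c ∈ T.down → c ∈ T'.down

def valN (q : P) : Set (ULift.{w1} (Set (Fml (Fin l.length)))) :=
  {T | ∃ i : Fin l.length, l.get i = q ∧ Fml.var i ∈ T.down}

/-- Truth lemma for the theory model. -/
lemma truth_lemma : ∀ (χ : Fml P) (x : A), x ∈ W →
    (bsat (WN.{v, w1, w2} l W Rh Rv val : Set (ULift.{w1} (Set (Fml (Fin l.length)))))
        (RhN l) (RvN l) (valN l) ⟨Th l W Rh Rv val x⟩ χ ↔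
      bsat W Rh Rv val x (decode l (codeF l hl χ))) := by
  intro χ
  induction χ with
  | var q =>
      intro x hx
      simp only [bsat, valN, Set.mem_setOf_eq, codeF, subst, codeVar]
      by_cases hq : q ∈ l
      · rw [dif_pos hq]
        have hspec := Classical.choose_spec (List.mem_iff_get.mp hq)
        constructor
        · rintro ⟨i, hi, hvar⟩
          have : bsat W Rh Rv val x (decode l (.var i)) := hvar
          simp only [decode, subst, bsat] at this
          simp only [decode, subst, bsat, hspec]
          rwa [hi] at this
        · intro h
          refine ⟨Classical.choose (List.mem_iff_get.mp hq), hspec, ?_⟩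
          show bsat W Rh Rv val x (decode l (.var _))
          simp only [decode, subst, bsat, hspec]
          simp only [decode, subst, bsat] at h ⊢
          rwa [hspec] at h
      · rw [dif_neg hq]
        constructor
        · rintro ⟨i, hi, -⟩
          exact absurd (hi ▸ List.get_mem l i) hq
        · intro h
          exfalso
          simp only [decode, subst, bsat] at h
          exact h.2 h.1
  | delta => intro x hx; simp [bsat, codeF, decode, subst]
  | neg χ ih =>
      intro x hx
      simp only [bsat, codeF, decode, subst] at *
      rw [ih x hx]
  | and χ θ ihχ ihθ =>
      intro x hx
      simp only [bsat, codeF, decode, subst] at *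
      rw [ihχ x hx, ihθ x hx]
  | boxh χ ih =>
      intro x hx
      simp only [bsat]
      constructor
      · intro hb
        show ∀ y, y ∈ W → Rh x y → _
        intro y hy hr
        have hR : RhN l ⟨Th l W Rh Rv val x⟩ ⟨Th l W Rh Rv val y⟩ := by
          intro c hc
          have : bsat W Rh Rv val x (decode l (.boxh c)) := hc
          simp only [decode, subst, bsat] at this
          exact this y hy hr
        have := hb ⟨Th l W Rh Rv val y⟩ ⟨y, hy, rfl⟩ hR
        exact (ih y hy).mp this
      · intro hb T hT hR
        obtain ⟨y, hy, hTy⟩ := hT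
        have hTeq : T = ⟨Th l W Rh Rv val y⟩ := by
          cases T; exact congrArg ULift.up hTy
        subst hTeq
        rw [ih y hy]
        have hmem : Fml.boxh (codeF l hl χ) ∈ Th l W Rh Rv val x := by
          show bsat W Rh Rv val x (decode l (.boxh _))
          simp only [decode, subst]
          exact hb
        exact hR (codeF l hl χ) hmem
  | boxv χ ih =>
      intro x hx
      simp only [bsat]
      constructor
      · intro hb
        show ∀ y, y ∈ W → Rv x y → _
        intro y hy hr
        have hR : RvN l ⟨Th l W Rh Rv val x⟩ ⟨Th l W Rh Rv val y⟩ := by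
          intro c hc
          have : bsat W Rh Rv val x (decode l (.boxv c)) := hc
          simp only [decode, subst, bsat] at this
          exact this y hy hr
        have := hb ⟨Th l W Rh Rv val y⟩ ⟨y, hy, rfl⟩ hR
        exact (ih y hy).mp this
      · intro hb T hT hR
        obtain ⟨y, hy, hTy⟩ := hT
        have hTeq : T = ⟨Th l W Rh Rv val y⟩ := by
          cases T; exact congrArg ULift.up hTy
        subst hTeq
        rw [ih y hy]
        have hmem : Fml.boxv (codeF l hl χ) ∈ Th l W Rh Rv val x := by
          show bsat W Rh Rv val x (decode l (.boxv _))
          simp only [decode, subst]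
          exact hb
        exact hR (codeF l hl χ) hmem

end TheoryModel

/-- Global consequence over the product logic transfers between arbitrary universes. -/
lemma glob_transfer {Ch Cv : ∀ U : Type u, KFrm U → Prop} {φ ψ : Fml P}
    (hφ : deltaFree φ) (hψ : deltaFree ψ)
    (h : GlobCons.{w1} (ProductLogic Ch Cv) φ ψ) :
    GlobCons.{w2} (ProductLogic Ch Cv) φ ψ := by
  intro A W Rh Rv val hL hφg
  intro x0 hx0
  by_contra hns
  set l : List P := varList φ ++ varList ψ with hldef
  have hl : l ≠ [] := by
    simp only [hldef, ne_eq, List.append_eq_nil_iff, not_and]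
    intro h1
    exact absurd h1 (varList_ne_nil φ hφ)
  have hsubφ : ∀ q ∈ varList φ, q ∈ l := fun q hq => by simp [hldef, hq]
  have hsubψ : ∀ q ∈ varList ψ, q ∈ l := fun q hq => by simp [hldef, hq]
  have hLN : ∀ χ ∈ ProductLogic Ch Cv (P := P),
      GlobTrue ((WN.{v, w1, w2} l W Rh Rv val : Set (ULift.{w1} (Set (Fml (Fin l.length)))))) (RhN l) (RvN l) (valN l) χ := by
    rintro χ hχ T ⟨x, hx, hTx⟩
    have hTeq : T = ⟨Th l W Rh Rv val x⟩ := by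
      cases T; exact congrArg ULift.up hTx
    subst hTeq
    rw [truth_lemma l hl W Rh Rv val χ x hx]
    exact hL _ (productLogic_decode_codeF l hl χ hχ) x hx
  have hφN : GlobTrue ((WN.{v, w1, w2} l W Rh Rv val : Set (ULift.{w1} (Set (Fml (Fin l.length)))))) (RhN l) (RvN l) (valN l) φ := by
    rintro T ⟨x, hx, hTx⟩
    have hTeq : T = ⟨Th l W Rh Rv val x⟩ := by
      cases T; exact congrArg ULift.up hTx
    subst hTeq
    rw [truth_lemma l hl W Rh Rv val φ x hx, decode_codeF l hl φ hsubφ]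
    exact hφg x hx
  have hψN := h _ ((WN.{v, w1, w2} l W Rh Rv val : Set (ULift.{w1} (Set (Fml (Fin l.length)))))) (RhN l) (RvN l) (valN l) hLN hφN
    ⟨Th l W Rh Rv val x0⟩ ⟨x0, hx0, rfl⟩
  rw [truth_lemma l hl W Rh Rv val ψ x0 hx0, decode_codeF l hl ψ hsubψ] at hψN
  exact hns hψN

end Transfer
/-- **Reduction of global product consequence to δ-product validity**: if the frame
classes of the Kripke complete logics `L_h`, `L_v` are closed under isomorphic copies and
under disjoint unions with a spy-point, and `L_h × L_v` is globally Kripke complete, then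
for all δ-free formulas `φ`, `ψ`:
`φ ⊨*_{L_h × L_v} ψ` iff `(univ^δ ∧ □_h□_v φ) → □_h□_v ψ ∈ L_h ×^δ L_v`. -/
theorem global_consequence_reduction {P : Type v} (Ch Cv : ∀ U : Type u, KFrm U → Prop)
    (hChIso : ∀ (U U' : Type u) (F : KFrm U) (F' : KFrm U'), Ch U F → FrmIso F F' → Ch U' F')
    (hCvIso : ∀ (U U' : Type u) (F : KFrm U) (F' : KFrm U'), Cv U F → FrmIso F F' → Cv U' F')
    (hChSpy : ∀ (U I : Type u) (F : I → KFrm U), (∀ i : I, Ch U (F i)) →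
      Ch (Option (U × I)) (spyUnion F))
    (hCvSpy : ∀ (U I : Type u) (F : I → KFrm U), (∀ i : I, Cv U (F i)) →
      Cv (Option (U × I)) (spyUnion F))
    (hGKC : ∀ φ ψ : Fml P, deltaFree φ → deltaFree ψ →
      (GlobCons (ProductLogic Ch Cv) φ ψ ↔
        ∀ (U : Type u) (F G : KFrm U), Ch U F → Cv U G → ∀ val : P → Set (U × U),
          GlobTrue (F.W ×ˢ G.W) (prodRh F G) (prodRv F G) val φ →
          GlobTrue (F.W ×ˢ G.W) (prodRh F G) (prodRv F G) val ψ)) :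
    ∀ φ ψ : Fml P, deltaFree φ → deltaFree ψ →
      (GlobCons (ProductLogic Ch Cv) φ ψ ↔
        DProdValid Ch Cv
          (Fml.imp (.and univDelta (.boxh (.boxv φ))) (.boxh (.boxv ψ)))) := by
  intro φ ψ hφ hψ
  constructor
  · -- GlobCons → DProdValid
    intro hGC0
    have hGC := glob_transfer hφ hψ hGC0
    clear hGC0
    rintro U F G hF hG val ⟨p1, p2⟩ ⟨hp1, hp2⟩
    show ¬ _
    simp only [Fml.imp, Fml.or, dsat, not_not]
    rintro ⟨⟨hUniv, hBoxφ⟩, hB⟩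
    simp only [univDelta, Fml.diav, Fml.diah, dsat, not_forall] at hUniv
    obtain ⟨hu1, hu2, hu3, hu4⟩ := hUniv
    -- consequences of univDelta
    have c1 : ∀ x, x ∈ F.W → F.R p1 x → x ∈ G.W ∧ G.R p2 x := by
      intro x hx hr
      have h1 := hu1 x hx hr
      push_neg at h1
      obtain ⟨y, hy, hry, heq, -, -⟩ := h1
      subst heq
      exact ⟨hy, hry⟩
    have c2 : ∀ x, x ∈ F.W → F.R p1 x → ∀ x', x' ∈ F.W → F.R x x' →
        x' ∈ G.W ∧ G.R p2 x' := by
      intro x hx hr x' hx' hr'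
      have h1 := hu2 x hx hr x' hx' hr'
      push_neg at h1
      obtain ⟨y, hy, hry, heq, -, -⟩ := h1
      subst heq
      exact ⟨hy, hry⟩
    have c3 : ∀ y, y ∈ G.W → G.R p2 y → y ∈ F.W ∧ F.R p1 y := by
      intro y hy hr
      have h1 := hu3 y hy hr
      push_neg at h1
      obtain ⟨x, hx, hrx, heq, -, -⟩ := h1
      subst heq
      exact ⟨hx, hrx⟩
    have c4 : ∀ y, y ∈ G.W → G.R p2 y → ∀ y', y' ∈ G.W → G.R y y' →
        y' ∈ F.W ∧ F.R p1 y' := by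
      intro y hy hr y' hy' hr'
      have h1 := hu4 y hy hr y' hy' hr'
      push_neg at h1
      obtain ⟨x, hx, hrx, heq, -, -⟩ := h1
      subst heq
      exact ⟨hx, hrx⟩
    set S : Set U := {x | x ∈ F.W ∧ F.R p1 x} with hS
    have hSsub : S ×ˢ S ⊆ F.W ×ˢ G.W := by
      rintro ⟨x, y⟩ ⟨hx, hy⟩
      exact ⟨hx.1, (c1 y hy.1 hy.2).1⟩
    have hclh : ∀ a ∈ S ×ˢ S, ∀ b ∈ F.W ×ˢ G.W, prodRh F G a b → b ∈ S ×ˢ S := by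
      rintro ⟨x, y⟩ ⟨hx, hy⟩ ⟨x', y'⟩ ⟨hx', hy'⟩ ⟨hr, he⟩
      have h2 := c2 x hx.1 hx.2 x' hx' hr
      have h3 := c3 x' h2.1 h2.2
      exact ⟨h3, by simp only at he; rw [← he]; exact hy⟩
    have hclv : ∀ a ∈ S ×ˢ S, ∀ b ∈ F.W ×ˢ G.W, prodRv F G a b → b ∈ S ×ˢ S := by
      rintro ⟨x, y⟩ ⟨hx, hy⟩ ⟨x', y'⟩ ⟨hx', hy'⟩ ⟨he, hr⟩
      have h1 := c1 y hy.1 hy.2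
      have h4 := c4 y h1.1 h1.2 y' hy' hr
      exact ⟨by simp only at he; rw [← he]; exact hx, h4⟩
    -- transfer between restricted and full models
    have transfer : ∀ χ : Fml P, deltaFree χ → ∀ q ∈ S ×ˢ S,
        (bsat (S ×ˢ S) (prodRh F G) (prodRv F G) val q χ ↔
          dsat F.W G.W F.R G.R val q χ) := by
      intro χ hχ q hq
      rw [bsat_gen (F.W ×ˢ G.W) (S ×ˢ S) (prodRh F G) (prodRv F G) val hSsub hclh hclv χ q hq]
      exact (dsat_prod F G val χ hχ q (hSsub hq)).symm
    have hLog : ∀ χ ∈ ProductLogic Ch Cv (P := P),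
        GlobTrue (S ×ˢ S) (prodRh F G) (prodRv F G) val χ := by
      rintro χ ⟨hdf, hvalid⟩ q hq
      exact (bsat_gen (F.W ×ˢ G.W) (S ×ˢ S) (prodRh F G) (prodRv F G) val hSsub hclh hclv
        χ q hq).mpr (hvalid U F G hF hG val q (hSsub hq))
    have hφglob : GlobTrue (S ×ˢ S) (prodRh F G) (prodRv F G) val φ := by
      rintro ⟨x, y⟩ ⟨hx, hy⟩
      have h1 := c1 y hy.1 hy.2
      have hd : dsat F.W G.W F.R G.R val (x, y) φ := hBoxφ x hx.1 hx.2 y h1.1 h1.2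
      exact (transfer φ hφ (x, y) ⟨hx, hy⟩).mpr hd
    have hψglob := hGC (U × U) (S ×ˢ S) (prodRh F G) (prodRv F G) val hLog hφglob
    apply hB
    intro x hx hrx y hy hry
    have hxS : x ∈ S := ⟨hx, hrx⟩
    have hyS : y ∈ S := c3 y hy hry
    exact (transfer ψ hψ (x, y) ⟨hxS, hyS⟩).mp (hψglob (x, y) ⟨hxS, hyS⟩)
  · -- DProdValid → GlobCons
    intro hval
    refine glob_transfer hφ hψ ((hGKC φ ψ hφ hψ).mpr ?_)
    rintro U F G hF hG val0 hφg ⟨a, b⟩ ⟨ha, hb⟩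
    have hH : Ch (Option (U × U)) (spyH F G) :=
      hChIso _ _ _ _ (hChSpy U (↥G.W) (fun _ => F) (fun _ => hF)) (spyH_iso F G)
    have hV : Cv (Option (U × U)) (spyV F G) :=
      hCvIso _ _ _ _ (hCvSpy U (↥F.W) (fun _ => G) (fun _ => hG)) (spyV_iso F G)
    have hmain := hval (Option (U × U)) (spyH F G) (spyV F G) hH hV (spyVal val0)
      (none, none) ⟨Or.inl rfl, Or.inl rfl⟩
    simp only [Fml.imp, Fml.or, dsat, not_not] at hmain
    -- the antecedent holds at (none, none)
    have hUniv : dsat (spyH F G).W (spyV F G).W (spyH F G).R (spyV F G).R (spyVal val0)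
        (none, none) univDelta := by
      simp only [univDelta, Fml.diav, Fml.diah, dsat]
      refine ⟨?_, ?_, ?_, ?_⟩
      · rintro x hx (⟨-, w, i, rfl, hw, hi⟩ | ⟨w, w', i, h, -⟩)
        · intro hall
          exact hall (some (w, i)) (Or.inr ⟨w, i, rfl, hw, hi⟩)
            (Or.inl ⟨rfl, w, i, rfl, hw, hi⟩)
            ⟨rfl, Or.inr ⟨w, i, rfl, hw, hi⟩, Or.inr ⟨w, i, rfl, hw, hi⟩⟩
        · exact absurd h (by simp)
      · rintro x hx (⟨-, w, i, rfl, hw, hi⟩ | ⟨w, w', i, h, -⟩)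
        · rintro x' hx' (⟨h, -⟩ | ⟨w1, w', i1, heq, rfl, hw1, hw', hi1, hr⟩)
          · exact absurd h (by simp)
          · intro hall
            exact hall (some (w', i1)) (Or.inr ⟨w', i1, rfl, hw', hi1⟩)
              (Or.inl ⟨rfl, w', i1, rfl, hw', hi1⟩)
              ⟨rfl, Or.inr ⟨w', i1, rfl, hw', hi1⟩, Or.inr ⟨w', i1, rfl, hw', hi1⟩⟩
        · exact absurd h (by simp)
      · rintro y hy (⟨-, i, v, rfl, hi, hv⟩ | ⟨i, v, v', h, -⟩)
        · intro hall
          exact hall (some (i, v)) (Or.inr ⟨i, v, rfl, hi, hv⟩)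
            (Or.inl ⟨rfl, i, v, rfl, hi, hv⟩)
            ⟨rfl, Or.inr ⟨i, v, rfl, hi, hv⟩, Or.inr ⟨i, v, rfl, hi, hv⟩⟩
        · exact absurd h (by simp)
      · rintro y hy (⟨-, i, v, rfl, hi, hv⟩ | ⟨i, v, v', h, -⟩)
        · rintro y' hy' (⟨h, -⟩ | ⟨i1, v1, v', heq, rfl, hi1, hv1, hv', hr⟩)
          · exact absurd h (by simp)
          · intro hall
            exact hall (some (i1, v')) (Or.inr ⟨i1, v', rfl, hi1, hv'⟩)
              (Or.inl ⟨rfl, i1, v', rfl, hi1, hv'⟩)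
              ⟨rfl, Or.inr ⟨i1, v', rfl, hi1, hv'⟩, Or.inr ⟨i1, v', rfl, hi1, hv'⟩⟩
        · exact absurd h (by simp)
    have hBoxφ : ∀ x ∈ (spyH F G).W, (spyH F G).R none x →
        ∀ y ∈ (spyV F G).W, (spyV F G).R none y →
          dsat (spyH F G).W (spyV F G).W (spyH F G).R (spyV F G).R (spyVal val0) (x, y) φ := by
      rintro x hx (⟨-, w, i, rfl, hw, hi⟩ | ⟨w, w', i, h, -⟩)
      · rintro y hy (⟨-, i', v, rfl, hi', hv⟩ | ⟨i', v, v', h, -⟩)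
        · exact (dsat_spy F G val0 φ hφ w i i' v hw hi hi' hv).mpr (hφg (w, v) ⟨hw, hv⟩)
        · exact absurd h (by simp)
      · exact absurd h (by simp)
    have hB : ∀ x ∈ (spyH F G).W, (spyH F G).R none x →
        ∀ y ∈ (spyV F G).W, (spyV F G).R none y →
          dsat (spyH F G).W (spyV F G).W (spyH F G).R (spyV F G).R (spyVal val0) (x, y) ψ := by
      by_contra hnB
      exact hmain ⟨⟨hUniv, hBoxφ⟩, hnB⟩
    have hfin := hB (some (a, b)) (Or.inr ⟨a, b, rfl, ha, hb⟩)
      (Or.inl ⟨rfl, a, b, rfl, ha, hb⟩) (some (a, b)) (Or.inr ⟨a, b, rfl, ha, hb⟩)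
      (Or.inl ⟨rfl, a, b, rfl, ha, hb⟩)
    exact (dsat_spy F G val0 ψ hψ a b a b ha hb ha hb).mp hfin
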